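/- Let y₁,…,y_N, x̃₁,…,x̃_N ∈ ℝ³ with Σᵢ mᵢ x̃ᵢ = 0, mᵢ, kᵢ > 0, M = Σᵢ mᵢ, μ > 0, and J = −Σᵢ mᵢ (x̃ᵢ)̂². Suppose (p, R, v, ω) : ℝ → ℝ³ × ℝ^{3×3} × ℝ³ × ℝ³ is differentiable, satisfies R(t) ∈ SO(3) for all t, and solves ṗ = v, Ṙ = R ω̂, M v̇ = Σᵢ kᵢ(yᵢ − R x̃ᵢ − p) − μ M v, J ω̇ = Σᵢ (kᵢ x̃ᵢ × (Rᵀ(yᵢ − p)) − μ mᵢ x̃ᵢ × (ω × x̃ᵢ)) − ω × J ω. Then the total energy t ↦ V(t) = (M/2)‖v(t)‖² + (1/2)⟨ω(t), J ω(t)⟩ + Σᵢ (kᵢ/2)‖yᵢ − R(t) x̃ᵢ − p(t)‖² is differentiable with derivative V̇(t) = −μ M ‖v(t)‖² − μ ⟨ω(t), J ω(t)⟩ ≤ 0; in particular V is nonincreasing. -/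

import Mathlib

open Matrix Filter
open scoped RealInnerProductSpace

noncomputable section

/-- Vectors in ℝ³ with the Euclidean norm. -/
abbrev V3 : Type := EuclideanSpace ℝ (Fin 3)

/-- The cross product on ℝ³. -/
def cross3 (a b : V3) : V3 :=
  WithLp.toLp 2 ![a 1 * b 2 - a 2 * b 1, a 2 * b 0 - a 0 * b 2, a 0 * b 1 - a 1 * b 0]

/-- The skew-symmetric matrix `â` of a vector, satisfying `â b = a × b`. -/
def hat (a : V3) : Matrix (Fin 3) (Fin 3) ℝ :=
  !![0, -(a 2), a 1; a 2, 0, -(a 0); -(a 1), a 0, 0]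

/-- Action of a 3×3 matrix on a vector in ℝ³. -/
def act (R : Matrix (Fin 3) (Fin 3) ℝ) (v : V3) : V3 := WithLp.toLp 2 (R.mulVec v)

/-- Membership in SO(3). -/
def isSO3 (R : Matrix (Fin 3) (Fin 3) ℝ) : Prop := Rᵀ * R = 1 ∧ R.det = 1

attribute [local instance] Matrix.normedAddCommGroup Matrix.normedSpace

/- ### Auxiliary lemmas -/

lemma inner3 (a b : V3) : ⟪a, b⟫ = a 0 * b 0 + a 1 * b 1 + a 2 * b 2 := by
  simp [PiLp.inner_apply, Fin.sum_univ_three, mul_comm]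

lemma act_apply (A : Matrix (Fin 3) (Fin 3) ℝ) (b : V3) (i : Fin 3) :
    act A b i = A i 0 * b 0 + A i 1 * b 1 + A i 2 * b 2 := by
  simp [act, Matrix.mulVec, dotProduct, Fin.sum_univ_three]

lemma act_hat (a b : V3) : act (hat a) b = cross3 a b := by
  ext i; fin_cases i <;> simp [act_apply, cross3, hat] <;> ring

lemma act_mul (A B : Matrix (Fin 3) (Fin 3) ℝ) (c : V3) :
    act (A * B) c = act A (act B c) := by
  simp [act, Matrix.mulVec_mulVec]

lemma act_one (c : V3) : act 1 c = c := by
  simp [act]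

lemma act_neg (A : Matrix (Fin 3) (Fin 3) ℝ) (c : V3) : act (-A) c = -(act A c) := by
  simp [act, Matrix.neg_mulVec]

lemma act_smul (r : ℝ) (A : Matrix (Fin 3) (Fin 3) ℝ) (c : V3) :
    act (r • A) c = r • act A c := by
  simp [act, Matrix.smul_mulVec]

lemma act_transpose (A : Matrix (Fin 3) (Fin 3) ℝ) (a b : V3) :
    ⟪a, act A b⟫ = ⟪act Aᵀ a, b⟫ := by
  simp only [inner3, act_apply, Matrix.transpose_apply]; ring

lemma triple_cyclic (a b c : V3) : ⟪a, cross3 b c⟫ = ⟪cross3 a b, c⟫ := by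
  simp only [inner3, cross3, PiLp.toLp_apply]
  simp only [Matrix.cons_val_zero, Matrix.cons_val_one, Matrix.head_cons,
    Matrix.cons_val_two, Matrix.tail_cons]
  ring

lemma inner_cross_self (a b : V3) : ⟪a, cross3 b a⟫ = 0 := by
  simp only [inner3, cross3, PiLp.toLp_apply]
  simp only [Matrix.cons_val_zero, Matrix.cons_val_one, Matrix.head_cons,
    Matrix.cons_val_two, Matrix.tail_cons]
  ring

lemma inner_cross_self' (a b : V3) : ⟪a, cross3 a b⟫ = 0 := by
  simp only [inner3, cross3, PiLp.toLp_apply]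
  simp only [Matrix.cons_val_zero, Matrix.cons_val_one, Matrix.head_cons,
    Matrix.cons_val_two, Matrix.tail_cons]
  ring

lemma hat_transpose (a : V3) : (hat a)ᵀ = -(hat a) := by
  ext i j; fin_cases i <;> fin_cases j <;> simp [hat]

lemma act_hathat (a w : V3) : act (hat a * hat a) w = -(cross3 a (cross3 w a)) := by
  rw [act_mul, act_hat, act_hat]
  ext i
  fin_cases i <;> simp [cross3] <;> ring

lemma inner_cross_cross (a w : V3) : ⟪w, cross3 a (cross3 w a)⟫ = ‖cross3 w a‖ ^ 2 := by
  rw [← real_inner_self_eq_norm_sq]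
  simp only [inner3, cross3, PiLp.toLp_apply]
  simp only [Matrix.cons_val_zero, Matrix.cons_val_one, Matrix.head_cons,
    Matrix.cons_val_two, Matrix.tail_cons]
  ring

/-- `A ↦ act A c` as a continuous linear map. -/
def mulVecCLM (c : V3) : Matrix (Fin 3) (Fin 3) ℝ →L[ℝ] V3 :=
  LinearMap.toContinuousLinearMap
    { toFun := fun A => act A c
      map_add' := fun A B => by simp [act, Matrix.add_mulVec]
      map_smul' := fun r A => by simp [act, Matrix.smul_mulVec] }

/-- `w ↦ act A w` as a continuous linear map. -/
def actCLM (A : Matrix (Fin 3) (Fin 3) ℝ) : V3 →L[ℝ] V3 :=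
  LinearMap.toContinuousLinearMap
    { toFun := fun w => act A w
      map_add' := fun x y => by simp [act, Matrix.mulVec_add]
      map_smul' := fun r x => by simp [act, Matrix.mulVec_smul] }

lemma act_sum {ι : Type*} (s : Finset ι) (f : ι → Matrix (Fin 3) (Fin 3) ℝ) (c : V3) :
    act (∑ i ∈ s, f i) c = ∑ i ∈ s, act (f i) c :=
  map_sum (mulVecCLM c) f s

/-- Key identity used to cancel the conservative forces. -/
lemma key_cancel (Rm : Matrix (Fin 3) (Fin 3) ℝ) (hR : Rmᵀ * Rm = 1) (a b w : V3) :
    ⟪w, cross3 a (act Rmᵀ b)⟫ = ⟪b - act Rm a, act Rm (cross3 w a)⟫ := by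
  have h2 : act Rmᵀ (b - act Rm a) = act Rmᵀ b - a := by
    have h1 : act Rmᵀ (b - act Rm a) = act Rmᵀ b - act Rmᵀ (act Rm a) := by
      ext i
      simp only [act_apply, PiLp.sub_apply]
      ring
    rw [h1, ← act_mul, hR, act_one]
  rw [act_transpose, h2, inner_sub_left, inner_cross_self, sub_zero, triple_cyclic]
  exact real_inner_comm _ _

theorem energy_nonincreasing_along_solutions (N : ℕ) (m k : Fin N → ℝ)
    (hm : ∀ i, 0 < m i) (hk : ∀ i, 0 < k i) (μ : ℝ) (hμ : 0 < μ)
    (y xt : Fin N → V3) (hcm : ∑ i, m i • xt i = 0)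
    (M : ℝ) (hM : M = ∑ i, m i)
    (J : Matrix (Fin 3) (Fin 3) ℝ) (hJ : J = -∑ i, m i • (hat (xt i) * hat (xt i)))
    (p v ω v' ω' : ℝ → V3) (R : ℝ → Matrix (Fin 3) (Fin 3) ℝ)
    (hSO : ∀ t, isSO3 (R t))
    (hp : ∀ t, HasDerivAt p (v t) t)
    (hRd : ∀ t, HasDerivAt R (R t * hat (ω t)) t)
    (hv : ∀ t, HasDerivAt v (v' t) t)
    (hveq : ∀ t, M • v' t = ∑ i, k i • (y i - act (R t) (xt i) - p t) - (μ * M) • v t)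
    (hw : ∀ t, HasDerivAt ω (ω' t) t)
    (hweq : ∀ t, act J (ω' t) =
      (∑ i, (k i • cross3 (xt i) (act (R t)ᵀ (y i - p t))
          - (μ * m i) • cross3 (xt i) (cross3 (ω t) (xt i))))
        - cross3 (ω t) (act J (ω t)))
    (V : ℝ → ℝ)
    (hV : ∀ t, V t = (M / 2) * ‖v t‖ ^ 2 + (1 / 2) * ⟪ω t, act J (ω t)⟫
        + ∑ i, (k i / 2) * ‖y i - act (R t) (xt i) - p t‖ ^ 2) :
    (∀ t, HasDerivAt V (-(μ * M) * ‖v t‖ ^ 2 - μ * ⟪ω t, act J (ω t)⟫) t)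
    ∧ (∀ t, -(μ * M) * ‖v t‖ ^ 2 - μ * ⟪ω t, act J (ω t)⟫ ≤ 0)
    ∧ Antitone V := by
  -- J is symmetric
  have hJT : Jᵀ = J := by
    rw [hJ]
    simp [Matrix.transpose_sum, Matrix.transpose_smul, Matrix.transpose_mul, hat_transpose]
  have hJsym : ∀ a b : V3, ⟪a, act J b⟫ = ⟪act J a, b⟫ := fun a b => by
    rw [act_transpose, hJT]
  -- explicit form of J acting on a vector
  have hJact : ∀ w : V3, act J w = ∑ i, m i • cross3 (xt i) (cross3 w (xt i)) := by
    intro w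
    rw [hJ, act_neg, act_sum, ← Finset.sum_neg_distrib]
    refine Finset.sum_congr rfl fun i _ => ?_
    rw [act_smul, act_hathat]
    simp
  -- ⟪ω, Jω⟫ is a weighted sum of squares
  have hwJw : ∀ w : V3, ⟪w, act J w⟫ = ∑ i, m i * ‖cross3 w (xt i)‖ ^ 2 := by
    intro w
    rw [hJact, inner_sum]
    refine Finset.sum_congr rfl fun i _ => ?_
    rw [real_inner_smul_right, inner_cross_cross]
  have hwJw_nonneg : ∀ w : V3, 0 ≤ ⟪w, act J w⟫ := by
    intro w
    rw [hwJw]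
    exact Finset.sum_nonneg fun i _ => mul_nonneg (hm i).le (by positivity)
  have hMnn : 0 ≤ M := hM ▸ Finset.sum_nonneg fun i _ => (hm i).le
  -- the nonpositivity claim
  have h2 : ∀ t, -(μ * M) * ‖v t‖ ^ 2 - μ * ⟪ω t, act J (ω t)⟫ ≤ 0 := by
    intro t
    have h1 : 0 ≤ μ * M * ‖v t‖ ^ 2 := by positivity
    have h2 := mul_nonneg hμ.le (hwJw_nonneg (ω t))
    linarith
  -- the derivative claim
  have h1 : ∀ t, HasDerivAt V (-(μ * M) * ‖v t‖ ^ 2 - μ * ⟪ω t, act J (ω t)⟫) t := by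
    intro t
    -- rewrite V in inner-product form
    have hVexpr : V = fun s => (M / 2) * ⟪v s, v s⟫ + (1 / 2) * ⟪ω s, act J (ω s)⟫
        + ∑ i, (k i / 2) * ⟪y i - act (R s) (xt i) - p s, y i - act (R s) (xt i) - p s⟫ := by
      funext s
      rw [hV s]
      simp only [← real_inner_self_eq_norm_sq]
    rw [hVexpr]
    -- derivatives of the pieces
    have hqd : ∀ i : Fin N, HasDerivAt (fun s => y i - act (R s) (xt i) - p s)
        (-(act (R t) (cross3 (ω t) (xt i))) - v t) t := by
      intro i
      have hact : HasDerivAt (fun s => act (R s) (xt i)) (act (R t * hat (ω t)) (xt i)) t :=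
        (mulVecCLM (xt i)).hasFDerivAt.comp_hasDerivAt t (hRd t)
      have h := ((hasDerivAt_const (x := t) (y i)).sub hact).sub (hp t)
      rw [zero_sub, act_mul, act_hat] at h
      exact h
    have hJω : HasDerivAt (fun s => act J (ω s)) (act J (ω' t)) t :=
      (actCLM J).hasFDerivAt.comp_hasDerivAt t (hw t)
    have hd1 : HasDerivAt (fun s => (M / 2) * ⟪v s, v s⟫)
        ((M / 2) * (⟪v t, v' t⟫ + ⟪v' t, v t⟫)) t :=
      ((hv t).inner ℝ (hv t)).const_mul _
    have hd2 : HasDerivAt (fun s => (1 / 2) * ⟪ω s, act J (ω s)⟫)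
        ((1 / 2) * (⟪ω t, act J (ω' t)⟫ + ⟪ω' t, act J (ω t)⟫)) t :=
      ((hw t).inner ℝ hJω).const_mul _
    have hd3 : HasDerivAt (fun s => ∑ i, (k i / 2) *
          ⟪y i - act (R s) (xt i) - p s, y i - act (R s) (xt i) - p s⟫)
        (∑ i, (k i / 2) *
          (⟪y i - act (R t) (xt i) - p t, -(act (R t) (cross3 (ω t) (xt i))) - v t⟫
            + ⟪-(act (R t) (cross3 (ω t) (xt i))) - v t, y i - act (R t) (xt i) - p t⟫)) t :=
      HasDerivAt.fun_sum fun i _ => (((hqd i).inner ℝ (hqd i)).const_mul _)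
    have htot := (hd1.add hd2).add hd3
    refine htot.congr_deriv (Eq.symm ?_)
    -- now the scalar computation
    have ev : ⟪v' t, v t⟫ = ⟪v t, v' t⟫ := real_inner_comm _ _
    have eω : ⟪ω' t, act J (ω t)⟫ = ⟪ω t, act J (ω' t)⟫ := by
      rw [hJsym]; exact real_inner_comm _ _
    -- step A
    have hA : M * ⟪v t, v' t⟫ =
        (∑ i, k i * ⟪y i - act (R t) (xt i) - p t, v t⟫) - μ * M * ‖v t‖ ^ 2 := by
      rw [← real_inner_smul_right, hveq t, inner_sub_right, inner_sum]
      rw [real_inner_smul_right, real_inner_self_eq_norm_sq]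
      congr 1
      refine Finset.sum_congr rfl fun i _ => ?_
      rw [real_inner_smul_right, real_inner_comm]
    -- step B
    have hB : ⟪ω t, act J (ω' t)⟫ =
        (∑ i, k i * ⟪y i - act (R t) (xt i) - p t, act (R t) (cross3 (ω t) (xt i))⟫)
          - μ * ⟪ω t, act J (ω t)⟫ := by
      rw [hweq t, inner_sub_right, inner_sum, inner_cross_self']
      have hμterm : ⟪ω t, act J (ω t)⟫ * μ =
          ∑ i, (μ * m i) * ⟪ω t, cross3 (xt i) (cross3 (ω t) (xt i))⟫ := by
        rw [hJact, inner_sum, Finset.sum_mul]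
        refine Finset.sum_congr rfl fun i _ => ?_
        rw [real_inner_smul_right]; ring
      have hterm : ∀ i : Fin N, ⟪ω t, k i • cross3 (xt i) (act (R t)ᵀ (y i - p t))
            - (μ * m i) • cross3 (xt i) (cross3 (ω t) (xt i))⟫
          = k i * ⟪y i - act (R t) (xt i) - p t, act (R t) (cross3 (ω t) (xt i))⟫
            - (μ * m i) * ⟪ω t, cross3 (xt i) (cross3 (ω t) (xt i))⟫ := by
        intro i
        rw [inner_sub_right, real_inner_smul_right, real_inner_smul_right,
          key_cancel (R t) (hSO t).1]
        congr 3
        abel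
      rw [Finset.sum_congr rfl fun i _ => hterm i, Finset.sum_sub_distrib]
      have : ∑ i, (μ * m i) * ⟪ω t, cross3 (xt i) (cross3 (ω t) (xt i))⟫
          = μ * ⟪ω t, act J (ω t)⟫ := by rw [← hμterm]; ring
      rw [this]; ring
    -- step C (per-term expansion of the spring energy derivative)
    have hC : ∀ i : Fin N,
        ⟪y i - act (R t) (xt i) - p t, -(act (R t) (cross3 (ω t) (xt i))) - v t⟫
        = -⟪y i - act (R t) (xt i) - p t, act (R t) (cross3 (ω t) (xt i))⟫
          - ⟪y i - act (R t) (xt i) - p t, v t⟫ := by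
      intro i
      rw [inner_sub_right, inner_neg_right]
    -- assemble
    have hsum : (∑ i, (k i / 2) *
          (⟪y i - act (R t) (xt i) - p t, -(act (R t) (cross3 (ω t) (xt i))) - v t⟫
            + ⟪-(act (R t) (cross3 (ω t) (xt i))) - v t, y i - act (R t) (xt i) - p t⟫))
        = -(∑ i, k i * ⟪y i - act (R t) (xt i) - p t, act (R t) (cross3 (ω t) (xt i))⟫)
          - (∑ i, k i * ⟪y i - act (R t) (xt i) - p t, v t⟫) := by
      rw [← Finset.sum_neg_distrib, ← Finset.sum_sub_distrib]
      refine Finset.sum_congr rfl fun i _ => ?_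
      rw [real_inner_comm (y i - act (R t) (xt i) - p t)
        (-(act (R t) (cross3 (ω t) (xt i))) - v t), hC i]
      ring
    rw [ev, eω, hsum]
    linear_combination -hA - hB
  exact ⟨h1, h2, antitone_of_deriv_nonpos
    (fun t => (h1 t).differentiableAt) (fun t => by rw [(h1 t).deriv]; exact h2 t)⟩
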